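/- Let k be a field, d ≥ 1 an integer, and let K be a d-dimensional finite simplicial complex that is doubly Cohen–Macaulay over k. Then there exist minimal d-cycles c_1,…,c_m over k such that, with S_i the simplicial complex spanned by supp(c_i), one has K = S_1 ∪ ⋯ ∪ S_m and for every 1 < i ≤ m, the intersection S_i ∩ (S_1 ∪ ⋯ ∪ S_{i−1}) contains a face of dimension d (a set of cardinality d+1). -/
import Mathlib


namespace Paper2CM

variable {V : Type*} [Fintype V] [LinearOrder V]

/-- `sign(t,T) = (−1)^{|{s ∈ T : s < t}|}`. -/
def signOf (t : V) (T : Finset V) : ℤ := (-1) ^ (T.filter (fun s => s < t)).card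

/-- The simplicial boundary operator on formal chains with coefficients in an
abelian group `A`: `∂c(S) = Σ_{t ∉ S} sign(t, S ∪ {t}) • c(S ∪ {t})`. -/
def bdry {A : Type*} [AddCommGroup A] (c : Finset V → A) : Finset V → A :=
  fun S => ∑ t ∈ Sᶜ, signOf t (insert t S) • c (insert t S)

/-- A chain of degree `n - 1`, i.e. supported on sets of cardinality `n`. -/
def IsSimpChain {A : Type*} [AddCommGroup A] (n : ℕ) (c : Finset V → A) : Prop :=
  ∀ T, c T ≠ 0 → T.card = n

/-- `c'` is a subchain of `c`: each coefficient of `c'` agrees with that of `c` or is `0`. -/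
def Subchain {A : Type*} [AddCommGroup A] (c' c : Finset V → A) : Prop :=
  ∀ T, c' T = c T ∨ c' T = 0

/-- A minimal cycle supported on sets of cardinality `n` (so of dimension `n - 1`):
a nonzero cycle whose only subchains that are cycles are `0` and itself. -/
def IsMinimalCycle {A : Type*} [AddCommGroup A] (n : ℕ) (c : Finset V → A) : Prop :=
  c ≠ 0 ∧ IsSimpChain n c ∧ bdry c = 0 ∧
    ∀ c', Subchain c' c → bdry c' = 0 → c' = 0 ∨ c' = c

/-- The simplicial complex spanned by the support of a chain. -/
def spannedComplex {A : Type*} [AddCommGroup A] (c : Finset V → A) : Set (Finset V) :=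
  {S | ∃ T, c T ≠ 0 ∧ S ⊆ T}

/-- A (finite) simplicial complex on vertex type `V`: a collection of finite subsets
closed under taking subsets, containing the empty set. -/
def IsComplex (K : Set (Finset V)) : Prop :=
  ∅ ∈ K ∧ ∀ S ∈ K, ∀ T, T ⊆ S → T ∈ K

/-- The link of a face: `lk_L(T) = {S ∈ L : S ∩ T = ∅, S ∪ T ∈ L}`. -/
def cxLink (L : Set (Finset V)) (T : Finset V) : Set (Finset V) :=
  {S | S ∈ L ∧ Disjoint S T ∧ S ∪ T ∈ L}

/-- A pure complex: every face is contained in a face of maximal cardinality. -/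
def IsPure (L : Set (Finset V)) : Prop :=
  ∀ S ∈ L, ∃ F ∈ L, S ⊆ F ∧ ∀ G ∈ L, G.card ≤ F.card

/-- A chain of the complex `L` supported on faces of `L` of cardinality `n`. -/
def IsChainOn (k : Type*) [Field k] (L : Set (Finset V)) (n : ℕ) (c : Finset V → k) : Prop :=
  ∀ T, c T ≠ 0 → T ∈ L ∧ T.card = n

/-- Vanishing of the reduced homology `H̃_{n-1}(L; k)`: every cycle supported on
cardinality-`n` faces of `L` is the boundary of a chain on cardinality-`(n+1)` faces of `L`. -/
def HomologyVanishes (k : Type*) [Field k] (L : Set (Finset V)) (n : ℕ) : Prop :=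
  ∀ c : Finset V → k, IsChainOn k L n c → bdry c = 0 →
    ∃ b : Finset V → k, IsChainOn k L (n + 1) b ∧ bdry b = c

/-- Cohen–Macaulay over `k` via Reisner's criterion: `L` is pure and for every face
`T ∈ L` and every `i < dim lk_L(T)`, `H̃_i(lk_L(T); k) = 0` (here `i = n - 1`, and
`i < dim lk_L(T)` is expressed as: the link has a face of cardinality `> n`). -/
def IsCM (k : Type*) [Field k] (L : Set (Finset V)) : Prop :=
  IsPure L ∧ ∀ T ∈ L, ∀ n : ℕ, (∃ F ∈ cxLink L T, n < F.card) →
    HomologyVanishes k (cxLink L T) n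

/-- Doubly Cohen–Macaulay over `k`: `K` is CM and for every vertex `v` of `K`,
`K − v` is CM of the same dimension as `K` (same maximal cardinality of a face). -/
def Is2CM (k : Type*) [Field k] (K : Set (Finset V)) : Prop :=
  IsCM k K ∧ ∀ v : V, ({v} : Finset V) ∈ K →
    IsCM k {S | S ∈ K ∧ v ∉ S} ∧
    ∀ S ∈ K, ∃ F ∈ K, v ∉ F ∧ S.card ≤ F.card

set_option linter.unusedSectionVars false
open scoped Classical

section Aux
variable {k : Type*} [Field k]

lemma signOf_sq (t : V) (T : Finset V) : signOf t T * signOf t T = 1 := by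
  unfold signOf
  rw [← pow_add]
  exact Even.neg_one_pow ⟨_, rfl⟩

lemma signOf_cases (t : V) (T : Finset V) : signOf t T = 1 ∨ signOf t T = -1 := by
  unfold signOf
  rcases Nat.even_or_odd (T.filter (fun s => s < t)).card with h | h
  · exact Or.inl (Even.neg_one_pow h)
  · exact Or.inr (Odd.neg_one_pow h)

lemma signOf_smul_smul (t : V) (T : Finset V) (x : k) :
    signOf t T • signOf t T • x = x := by
  rw [smul_smul, signOf_sq, one_smul]

lemma signOf_smul_ne_zero (t : V) (T : Finset V) {x : k} (hx : x ≠ 0) :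
    signOf t T • x ≠ 0 := by
  rcases signOf_cases t T with h | h <;> rw [h] <;> simpa

lemma smul_eq_zero_of_signOf (t : V) (T : Finset V) {x : k}
    (h : signOf t T • x = 0) : x = 0 := by
  by_contra hx; exact signOf_smul_ne_zero t T hx h

lemma bdry_add (c c' : Finset V → k) : bdry (c + c') = bdry c + bdry c' := by
  funext S
  simp only [bdry, Pi.add_apply, smul_add, Finset.sum_add_distrib]

lemma bdry_sub (c c' : Finset V → k) : bdry (c - c') = bdry c - bdry c' := by
  funext S
  simp only [bdry, Pi.sub_apply, smul_sub, Finset.sum_sub_distrib]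

lemma bdry_zero : bdry (0 : Finset V → k) = 0 := by
  funext S; simp [bdry]

/-- Key sign identity. -/
lemma signOf_key {v t : V} {S : Finset V} (hv : v ∈ S) (ht : t ∉ S) :
    signOf t (insert t S) * signOf v (insert t S)
      = -(signOf v S * signOf t (insert t (S.erase v))) := by
  have htv : t ≠ v := fun h => ht (h ▸ hv)
  unfold signOf
  have h1 : (insert t S).filter (fun s => s < t) = S.filter (fun s => s < t) := by
    rw [Finset.filter_insert]; simp [lt_irrefl]
  have h2 : (insert t (S.erase v)).filter (fun s => s < t)
      = (S.filter (fun s => s < t)).erase v := by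
    rw [Finset.filter_insert]; simp [lt_irrefl, Finset.filter_erase]
  rw [h1, h2]
  have h3 : (insert t S).filter (fun s => s < v)
      = if t < v then insert t (S.filter (fun s => s < v)) else S.filter (fun s => s < v) := by
    rw [Finset.filter_insert]
  rcases lt_or_gt_of_ne htv with hlt | hgt
  · -- t < v
    rw [h3, if_pos hlt]
    have hti : t ∉ S.filter (fun s => s < v) := fun h => ht (Finset.mem_filter.mp h).1
    rw [Finset.card_insert_of_notMem hti]
    have hv' : v ∉ S.filter (fun s => s < t) := fun h => absurd (Finset.mem_filter.mp h).2 (by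
      exact not_lt.mpr hlt.le)
    rw [Finset.erase_eq_of_notMem hv']
    ring
  · -- v < t
    rw [h3, if_neg (not_lt.mpr hgt.le)]
    have hvm : v ∈ S.filter (fun s => s < t) := Finset.mem_filter.mpr ⟨hv, hgt⟩
    rw [Finset.card_erase_of_mem hvm]
    obtain ⟨a, ha⟩ : ∃ a, (S.filter (fun s => s < t)).card = a + 1 :=
      ⟨_, (Nat.succ_pred_eq_of_pos (Finset.card_pos.mpr ⟨v, hvm⟩)).symm⟩
    rw [ha]
    simp [pow_succ]
    ring

/-- The cone of a chain at a vertex. -/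
noncomputable def coneAt (v : V) (w : Finset V → k) : Finset V → k :=
  fun T => if v ∈ T then signOf v T • w (T.erase v) else 0

/-- The contraction of a chain at a vertex. -/
noncomputable def contrAt (v : V) (z : Finset V → k) : Finset V → k :=
  fun G => if v ∈ G then 0 else signOf v (insert v G) • z (insert v G)

lemma bdry_coneAt_mem (v : V) (w : Finset V → k) (hw : ∀ T, v ∈ T → w T = 0)
    {S : Finset V} (hv : v ∈ S) :
    bdry (coneAt v w) S = -(signOf v S • bdry w (S.erase v)) := by
  have hvc : v ∉ Sᶜ := by simp [hv]
  have step : ∀ t ∈ Sᶜ, signOf t (insert t S) • coneAt v w (insert t S)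
      = -(signOf v S • (signOf t (insert t (S.erase v)) • w (insert t (S.erase v)))) := by
    intro t ht
    have htS : t ∉ S := by simpa using ht
    have htv : t ≠ v := fun h => htS (h ▸ hv)
    have hvmem : v ∈ insert t S := Finset.mem_insert_of_mem hv
    have herase : (insert t S).erase v = insert t (S.erase v) :=
      Finset.erase_insert_of_ne htv
    simp only [coneAt, if_pos hvmem, herase, smul_smul]
    rw [signOf_key hv htS]
    simp [smul_smul]
  rw [bdry, Finset.sum_congr rfl step]
  rw [bdry]
  have hcompl : (S.erase v)ᶜ = insert v Sᶜ := by
    ext x; simp [Finset.mem_erase, Finset.mem_compl]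
  rw [hcompl, Finset.sum_insert hvc, hw _ (Finset.mem_insert_self v _), smul_zero, zero_add,
    Finset.smul_sum, ← Finset.sum_neg_distrib]

lemma bdry_coneAt_notMem (v : V) (w : Finset V → k)
    {S : Finset V} (hv : v ∉ S) :
    bdry (coneAt v w) S = w S := by
  have hvc : v ∈ Sᶜ := by simp [hv]
  rw [bdry, Finset.sum_eq_single_of_mem v hvc]
  · have : v ∈ insert v S := Finset.mem_insert_self v S
    simp only [coneAt, if_pos this, Finset.erase_insert hv]
    exact signOf_smul_smul v (insert v S) (w S)
  · intro t _ htv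
    have : v ∉ insert t S := by
      simp only [Finset.mem_insert]
      rintro (h | h)
      · exact htv h.symm
      · exact hv h
    simp [coneAt, this]

/-- boundary of a cone over a cycle vanishing on `v`-sets. -/
lemma bdry_coneAt_of_cycle (v : V) (w : Finset V → k) (hw : ∀ T, v ∈ T → w T = 0)
    (hcyc : bdry w = 0) : bdry (coneAt v w) = w := by
  funext S
  by_cases hv : v ∈ S
  · rw [bdry_coneAt_mem v w hw hv]
    rw [hcyc]
    simp [hw S hv]
  · exact bdry_coneAt_notMem v w hv

lemma contrAt_vanish (v : V) (z : Finset V → k) (T : Finset V) (hT : v ∈ T) :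
    contrAt v z T = 0 := by simp [contrAt, hT]

lemma coneAt_contrAt_add (v : V) (z : Finset V → k) :
    z = coneAt v (contrAt v z) + (fun T => if v ∈ T then 0 else z T) := by
  funext T
  by_cases hv : v ∈ T
  · have h1 : v ∉ T.erase v := Finset.notMem_erase v T
    simp only [coneAt, contrAt, Pi.add_apply, if_pos hv, if_neg h1, Finset.insert_erase hv,
      if_pos hv, add_zero]
    exact (signOf_smul_smul v T (z T)).symm
  · simp [coneAt, hv]

/-- the contraction of a cycle is a cycle. -/
lemma bdry_contrAt (v : V) (z : Finset V → k) (hz : bdry z = 0) :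
    bdry (contrAt v z) = 0 := by
  set w := contrAt v z with hwdef
  have hw : ∀ T, v ∈ T → w T = 0 := contrAt_vanish v z
  funext T
  by_cases hvT : v ∈ T
  · rw [bdry]
    apply Finset.sum_eq_zero
    intro t _
    rw [hw _ (Finset.mem_insert_of_mem hvT), smul_zero]
  · -- use S = insert v T
    have hr : bdry (fun T => if v ∈ T then (0:k) else z T) (insert v T) = 0 := by
      rw [bdry]
      apply Finset.sum_eq_zero
      intro t _
      have : v ∈ insert t (insert v T) := Finset.mem_insert_of_mem (Finset.mem_insert_self v T)
      simp [this]
    have hsplit := congrFun (congrArg bdry (coneAt_contrAt_add v z)) (insert v T)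
    rw [bdry_add, Pi.add_apply, hr, add_zero, hz] at hsplit
    have hmem : v ∈ insert v T := Finset.mem_insert_self v T
    rw [bdry_coneAt_mem v w hw hmem, Finset.erase_insert hvT] at hsplit
    rw [Pi.zero_apply] at hsplit
    have h0 : signOf v (insert v T) • bdry w T = 0 := neg_eq_zero.mp hsplit.symm
    exact smul_eq_zero_of_signOf v (insert v T) h0

/-- vertex-indicator chains. -/
noncomputable def vtxChain (a : V) : Finset V → k := fun T => if T = {a} then 1 else 0

lemma signOf_singleton (t : V) : signOf t ({t} : Finset V) = 1 := by
  unfold signOf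
  rw [Finset.filter_singleton]
  simp

lemma bdry_vtxChain (a : V) :
    bdry (vtxChain a : Finset V → k) = fun S => if S = ∅ then 1 else 0 := by
  funext S
  by_cases hS : S = (∅ : Finset V)
  · subst hS
    rw [bdry]
    have : ∀ t ∈ (∅ : Finset V)ᶜ, signOf t (insert t ∅) • (vtxChain a : Finset V → k) (insert t ∅)
        = if t = a then (1:k) else 0 := by
      intro t _
      have h1 : insert t (∅ : Finset V) = {t} := rfl
      rw [h1, signOf_singleton, one_smul]
      simp only [vtxChain, Finset.singleton_inj]
    rw [Finset.sum_congr rfl this]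
    have hc : (∅ : Finset V)ᶜ = Finset.univ := by simp
    rw [hc, Finset.sum_ite_eq' Finset.univ a (fun _ => (1:k))]
    simp
  · rw [bdry, if_neg hS]
    apply Finset.sum_eq_zero
    intro t ht
    have htS : t ∉ S := by simpa using ht
    have : insert t S ≠ {a} := by
      intro h
      have hsub : S ⊆ {a} := h ▸ Finset.subset_insert t S
      rcases Finset.subset_singleton_iff.mp hsub with h0 | h0
      · exact hS h0
      · have : t ∈ ({a} : Finset V) := h ▸ Finset.mem_insert_self t S
        have hta : t = a := Finset.mem_singleton.mp this
        exact htS (h0 ▸ Finset.mem_singleton.mpr hta)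
    simp [vtxChain, this]

/-- the pair chain `e_a - e_b` is a cycle. -/
lemma bdry_pairChain (a b : V) :
    bdry ((vtxChain a : Finset V → k) - vtxChain b) = 0 := by
  rw [bdry_sub, bdry_vtxChain, bdry_vtxChain]
  simp

/-! ### complexes basics -/

lemma cxLink_empty {K : Set (Finset V)} (hK : IsComplex K) : cxLink K ∅ = K := by
  ext S
  simp [cxLink]

lemma isComplex_cxLink {K : Set (Finset V)} (hK : IsComplex K) {U : Finset V} (hU : U ∈ K) :
    IsComplex (cxLink K U) := by
  constructor
  · exact ⟨hK.1, by simp, by simpa using hU⟩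
  · rintro S ⟨hSK, hSdisj, hSU⟩ T hT
    exact ⟨hK.2 S hSK T hT, Finset.disjoint_of_subset_left hT hSdisj,
      hK.2 _ hSU _ (Finset.union_subset_union hT (subset_refl U))⟩

/-! ### subchains -/

lemma Subchain.trans {c₁ c₂ c₃ : Finset V → k} (h12 : Subchain c₁ c₂) (h23 : Subchain c₂ c₃) :
    Subchain c₁ c₃ := by
  intro T
  rcases h12 T with h | h
  · rcases h23 T with h' | h'
    · exact Or.inl (h.trans h')
    · exact Or.inr (h.trans h')
  · exact Or.inr h

lemma Subchain.chainOn {L : Set (Finset V)} {n : ℕ} {c' c : Finset V → k}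
    (hsub : Subchain c' c) (hc : IsChainOn k L n c) : IsChainOn k L n c' := by
  intro T hT
  rcases hsub T with h | h
  · exact hc T (h ▸ hT)
  · exact absurd h hT

lemma Subchain.simpChain {n : ℕ} {c' c : Finset V → k}
    (hsub : Subchain c' c) (hc : IsSimpChain n c) : IsSimpChain n c' := by
  intro T hT
  rcases hsub T with h | h
  · exact hc T (h ▸ hT)
  · exact absurd h hT

lemma Subchain.sub {c' c : Finset V → k} (hsub : Subchain c' c) : Subchain (c - c') c := by
  intro T
  rcases hsub T with h | h
  · exact Or.inr (by simp [h])
  · exact Or.inl (by simp [h])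

/-- the support of a chain as a finset -/
noncomputable def esupp (c : Finset V → k) : Finset (Finset V) :=
  Finset.univ.filter (fun T => c T ≠ 0)

lemma mem_esupp {c : Finset V → k} {T : Finset V} : T ∈ esupp c ↔ c T ≠ 0 := by
  simp [esupp]

lemma esupp_sub_subset {c' c : Finset V → k} (hsub : Subchain c' c) :
    esupp (c - c') ⊆ esupp c := by
  intro T hT
  rw [mem_esupp] at hT ⊢
  rcases hsub T with h | h
  · simp [h] at hT
  · simpa [h] using hT

lemma esupp_subset_of_subchain {c' c : Finset V → k} (hsub : Subchain c' c) :
    esupp c' ⊆ esupp c := by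
  intro T hT
  rw [mem_esupp] at hT ⊢
  rcases hsub T with h | h
  · exact h ▸ hT
  · exact absurd h hT

lemma subchain_eq_of_esupp {c' c : Finset V → k} (hsub : Subchain c' c)
    (hne : c' ≠ c) : ∃ T, c T ≠ 0 ∧ c' T = 0 := by
  by_contra hcon
  push_neg at hcon
  apply hne
  funext T
  rcases hsub T with h | h
  · exact h
  · by_cases hcT : c T = 0
    · rw [h, hcT]
    · exact absurd h (by
        intro h0
        exact (h0 ▸ hcon T hcT : (0:k) ≠ 0) rfl)

/-- extraction of a minimal subcycle through a given support element -/
lemma extract_minimal :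
    ∀ (N : ℕ) (n : ℕ) (z : Finset V → k) (F : Finset V), IsSimpChain n z → bdry z = 0 →
      z F ≠ 0 → (esupp z).card ≤ N →
      ∃ c, Subchain c z ∧ IsMinimalCycle n c ∧ c F ≠ 0 := by
  intro N
  induction N with
  | zero =>
    intro n z F _ _ hzF hcard
    exact absurd (Nat.le_zero.mp hcard) (Finset.card_ne_zero_of_mem (mem_esupp.mpr hzF))
  | succ N ih =>
    intro n z F hchain hcyc hzF hcard
    by_cases hmin : ∀ c', Subchain c' z → bdry c' = 0 → c' = 0 ∨ c' = z
    · refine ⟨z, fun T => Or.inl rfl, ⟨?_, hchain, hcyc, hmin⟩, hzF⟩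
      intro h0
      exact hzF (by rw [h0]; rfl)
    · push_neg at hmin
      obtain ⟨c', hsub, hcyc', hne0, hnez⟩ := hmin
      obtain ⟨T₁, hzT₁, hcT₁⟩ := subchain_eq_of_esupp hsub hnez
      by_cases hcF : c' F ≠ 0
      · -- recurse into c'
        have hssub : esupp c' ⊂ esupp z := by
          refine ⟨esupp_subset_of_subchain hsub, fun h => ?_⟩
          exact (mem_esupp.mp (h (mem_esupp.mpr hzT₁))) hcT₁
        have hlt : (esupp c').card ≤ N := by
          have := Finset.card_lt_card hssub
          omega
        obtain ⟨c, hc1, hc2, hc3⟩ := ih n c' F (hsub.simpChain hchain) hcyc' hcF hlt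
        exact ⟨c, hc1.trans hsub, hc2, hc3⟩
      · push_neg at hcF
        -- recurse into z - c'
        have hsub2 : Subchain (z - c') z := hsub.sub
        have hT₀ : ∃ T₀, c' T₀ ≠ 0 := by
          by_contra hcon
          push_neg at hcon
          exact hne0 (funext fun T => hcon T)
        obtain ⟨T₀, hT₀⟩ := hT₀
        have hzT₀ : z T₀ ≠ 0 := by
          rcases hsub T₀ with h | h
          · exact h ▸ hT₀
          · exact absurd h hT₀
        have hdT₀ : (z - c') T₀ = 0 := by
          rcases hsub T₀ with h | h
          · simp [Pi.sub_apply, h]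
          · exact absurd h hT₀
        have hssub : esupp (z - c') ⊂ esupp z :=
          ⟨esupp_sub_subset hsub, fun h =>
            ((mem_esupp.mp (h (mem_esupp.mpr hzT₀))) hdT₀).elim⟩
        have hlt : (esupp (z - c')).card ≤ N := by
          have := Finset.card_lt_card hssub
          omega
        have hdF : (z - c') F ≠ 0 := by
          simp [Pi.sub_apply, hcF, hzF]
        have hdcyc : bdry (z - c') = 0 := by rw [bdry_sub, hcyc, hcyc']; simp
        obtain ⟨c, hc1, hc2, hc3⟩ := ih n (z - c') F (hsub2.simpChain hchain) hdcyc hdF hlt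
        exact ⟨c, hc1.trans hsub2, hc2, hc3⟩

/-- restriction of a chain to a class of sets -/
noncomputable def restr (C : Set (Finset V)) (c : Finset V → k) : Finset V → k :=
  fun T => if T ∈ C then c T else 0

lemma restr_subchain (C : Set (Finset V)) (c : Finset V → k) : Subchain (restr C c) c := by
  intro T
  by_cases h : T ∈ C
  · exact Or.inl (by simp [restr, h])
  · exact Or.inr (by simp [restr, h])

lemma restr_add (C : Set (Finset V)) (c c' : Finset V → k) :
    restr C (c + c') = restr C c + restr C c' := by
  funext T
  by_cases h : T ∈ C <;> simp [restr, h]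

/-- a set of faces is separating for `L` if every minimal cycle on `L` has support
inside it or disjoint from it -/
def Separating (L : Set (Finset V)) (n : ℕ) (C : Set (Finset V)) : Prop :=
  ∀ c : Finset V → k, IsMinimalCycle n c → IsChainOn k L n c →
    (∀ T, c T ≠ 0 → T ∈ C) ∨ (∀ T, c T ≠ 0 → T ∉ C)

lemma restr_eq_self {C : Set (Finset V)} {c : Finset V → k} (h : ∀ T, c T ≠ 0 → T ∈ C) :
    restr C c = c := by
  funext T
  by_cases hT : T ∈ C
  · simp [restr, hT]
  · simp only [restr, if_neg hT]
    by_contra hc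
    exact hT (h T fun h0 => hc h0.symm)

lemma restr_eq_zero {C : Set (Finset V)} {c : Finset V → k} (h : ∀ T, c T ≠ 0 → T ∉ C) :
    restr C c = 0 := by
  funext T
  by_cases hT : T ∈ C
  · simp only [restr, if_pos hT, Pi.zero_apply]
    by_contra hc
    exact h T hc hT
  · simp [restr, hT]

/-- restriction to a separating class preserves cycles -/
lemma bdry_restr_of_separating {L : Set (Finset V)} {n : ℕ} {C : Set (Finset V)}
    (hsep : Separating (k := k) L n C) :
    ∀ (N : ℕ) (z : Finset V → k), IsChainOn k L n z → bdry z = 0 → (esupp z).card ≤ N →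
      bdry (restr C z) = 0 := by
  intro N
  induction N with
  | zero =>
    intro z hz hcyc hcard
    have hz0 : z = 0 := by
      funext T
      by_contra hT
      exact absurd (Nat.le_zero.mp hcard) (Finset.card_ne_zero_of_mem (mem_esupp.mpr hT))
    rw [hz0]
    have : restr C (0 : Finset V → k) = 0 := by
      funext T; by_cases h : T ∈ C <;> simp [restr, h]
    rw [this, bdry_zero]
  | succ N ih =>
    intro z hz hcyc hcard
    by_cases hz0 : z = 0
    · rw [hz0]
      have : restr C (0 : Finset V → k) = 0 := by
        funext T; by_cases h : T ∈ C <;> simp [restr, h]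
      rw [this, bdry_zero]
    · obtain ⟨T₀, hT₀⟩ : ∃ T₀, z T₀ ≠ 0 := by
        by_contra hcon; push_neg at hcon; exact hz0 (funext hcon)
      have hsimp : IsSimpChain n z := fun T hT => (hz T hT).2
      obtain ⟨c, hcsub, hcmin, hcT₀⟩ :=
        extract_minimal (esupp z).card n z T₀ hsimp hcyc hT₀ le_rfl
      have hzT₀' : z T₀ ≠ 0 := hT₀
      -- z = (z - c) + c
      have hdecomp : restr C z = restr C (z - c) + restr C c := by
        rw [← restr_add]
        exact congrArg (restr C) (by funext T; simp)
      rw [hdecomp, bdry_add]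
      have hc_cyc : bdry (restr C c) = 0 := by
        rcases hsep c hcmin (hcsub.chainOn hz) with h | h
        · rw [restr_eq_self h]; exact hcmin.2.2.1
        · rw [restr_eq_zero h, bdry_zero]
      have hzc_chain : IsChainOn k L n (z - c) := (hcsub.sub).chainOn hz
      have hzc_cyc : bdry (z - c) = 0 := by rw [bdry_sub, hcyc, hcmin.2.2.1]; simp
      have hssub : esupp (z - c) ⊂ esupp z := by
        refine ⟨esupp_sub_subset hcsub, fun h => ?_⟩
        have hc0 : c T₀ = z T₀ := by
          rcases hcsub T₀ with h' | h'
          · exact h'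
          · exact absurd h' hcT₀
        have : (z - c) T₀ = 0 := by simp [Pi.sub_apply, hc0]
        exact (mem_esupp.mp (h (mem_esupp.mpr hzT₀'))) this
      have hlt : (esupp (z - c)).card ≤ N := by
        have h1 := Finset.card_lt_card hssub
        omega
      rw [ih (z - c) hzc_chain hzc_cyc hlt, hc_cyc, add_zero]

/-! ### consequences of CM / 2-CM -/

variable {K : Set (Finset V)} {d : ℕ}

/-- every face of `K` lies in a facet of cardinality `d+1` -/
lemma exists_facet (hdim : (∀ S ∈ K, S.card ≤ d + 1) ∧ ∃ S ∈ K, S.card = d + 1)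
    (hpure : IsPure K) {S : Finset V} (hS : S ∈ K) :
    ∃ F ∈ K, S ⊆ F ∧ F.card = d + 1 := by
  obtain ⟨F, hF, hSF, hmax⟩ := hpure S hS
  obtain ⟨S₀, hS₀, hS₀card⟩ := hdim.2
  exact ⟨F, hF, hSF, le_antisymm (hdim.1 F hF) (hS₀card ▸ hmax S₀ hS₀)⟩

/-- purity of links -/
lemma link_facet (hK : IsComplex K)
    (hdim : (∀ S ∈ K, S.card ≤ d + 1) ∧ ∃ S ∈ K, S.card = d + 1)
    (hpure : IsPure K) {U : Finset V} (hU : U ∈ K) {S : Finset V}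
    (hS : S ∈ cxLink K U) :
    ∃ F ∈ cxLink K U, S ⊆ F ∧ F.card + U.card = d + 1 := by
  obtain ⟨hSK, hSd, hSU⟩ := hS
  obtain ⟨F₀, hF₀, hSUF₀, hF₀card⟩ := exists_facet hdim hpure hSU
  have hUF₀ : U ⊆ F₀ := (Finset.union_subset_iff.mp hSUF₀).2
  have hSF₀ : S ⊆ F₀ := (Finset.union_subset_iff.mp hSUF₀).1
  refine ⟨F₀ \ U, ⟨hK.2 F₀ hF₀ _ (Finset.sdiff_subset), Finset.sdiff_disjoint, ?_⟩, ?_, ?_⟩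
  · rw [Finset.sdiff_union_of_subset hUF₀]
    exact hF₀
  · intro x hx
    exact Finset.mem_sdiff.mpr ⟨hSF₀ hx, Finset.disjoint_left.mp hSd hx⟩
  · rw [Finset.card_sdiff_of_subset hUF₀]
    have := Finset.card_le_card hUF₀
    omega

/-- faces of a link are small -/
lemma link_card_le (hdim : (∀ S ∈ K, S.card ≤ d + 1) ∧ ∃ S ∈ K, S.card = d + 1)
    {U : Finset V} {S : Finset V} (hS : S ∈ cxLink K U) :
    S.card + U.card ≤ d + 1 := by
  obtain ⟨hSK, hSd, hSU⟩ := hS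
  have := hdim.1 _ hSU
  rwa [Finset.card_union_of_disjoint hSd] at this

/-- in a 2-CM complex, any face avoiding a vertex extends to a `v`-free facet -/
lemma removed_vertex_facet (hdim : (∀ S ∈ K, S.card ≤ d + 1) ∧ ∃ S ∈ K, S.card = d + 1)
    (h2cm : Is2CM k K) {v : V} (hv : ({v} : Finset V) ∈ K)
    {U : Finset V} (hU : U ∈ K) (hvU : v ∉ U) :
    ∃ F₃, U ⊆ F₃ ∧ F₃ ∈ K ∧ v ∉ F₃ ∧ F₃.card = d + 1 := by
  obtain ⟨hCMv, hdimv⟩ := h2cm.2 v hv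
  obtain ⟨F₃, hF₃, hUF₃, hmax⟩ := hCMv.1 U ⟨hU, hvU⟩
  obtain ⟨S₀, hS₀, hS₀card⟩ := hdim.2
  obtain ⟨F₂, hF₂, hvF₂, hle⟩ := hdimv S₀ hS₀
  have h1 : d + 1 ≤ F₃.card := le_trans (hS₀card ▸ hle) (hmax F₂ ⟨hF₂, hvF₂⟩)
  exact ⟨F₃, hUF₃, hF₃.1, hF₃.2, le_antisymm (hdim.1 _ hF₃.1) h1⟩

/-- homology vanishing for links of `K - v` -/
lemma homology_vanishes_link_removed
    (hK : IsComplex K)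
    (hdim : (∀ S ∈ K, S.card ≤ d + 1) ∧ ∃ S ∈ K, S.card = d + 1)
    (h2cm : Is2CM k K) {v : V} (hv : ({v} : Finset V) ∈ K)
    {U : Finset V} (hU : U ∈ K) (hvU : v ∉ U) {m : ℕ} (hm : U.card + m = d) :
    HomologyVanishes k (cxLink {S | S ∈ K ∧ v ∉ S} U) m := by
  obtain ⟨hCMv, _⟩ := h2cm.2 v hv
  obtain ⟨F₃, hUF₃, hF₃K, hvF₃, hF₃card⟩ := removed_vertex_facet (k := k) hdim h2cm hv hU hvU
  refine hCMv.2 U ⟨hU, hvU⟩ m ⟨F₃ \ U, ⟨⟨hK.2 F₃ hF₃K _ Finset.sdiff_subset, fun h =>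
    hvF₃ (Finset.mem_sdiff.mp h).1⟩, Finset.sdiff_disjoint, ?_⟩, ?_⟩
  · rw [Finset.sdiff_union_of_subset hUF₃]
    exact ⟨hF₃K, hvF₃⟩
  · rw [Finset.card_sdiff_of_subset hUF₃]
    have := Finset.card_le_card hUF₃
    omega

lemma erase_union_insert {v : V} {G U : Finset V} (hv : v ∈ G) :
    G.erase v ∪ insert v U = G ∪ U := by
  ext x
  simp only [Finset.mem_union, Finset.mem_erase, Finset.mem_insert]
  constructor
  · rintro (⟨_, h⟩ | h | h)
    · exact Or.inl h
    · exact Or.inl (h ▸ hv)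
    · exact Or.inr h
  · rintro (h | h)
    · by_cases hxv : x = v
      · exact Or.inr (Or.inl hxv)
      · exact Or.inl ⟨hxv, h⟩
    · exact Or.inr (Or.inr h)

lemma insert_union_eq {v : V} (A U : Finset V) :
    insert v A ∪ U = A ∪ insert v U := by
  ext x
  simp only [Finset.mem_union, Finset.mem_insert]
  tauto

/-- **Extension lemma**: a cycle on the link of `insert v U` extends to a cycle on
the link of `U`. -/
lemma extension_lemma
    (hK : IsComplex K)
    (hdim : (∀ S ∈ K, S.card ≤ d + 1) ∧ ∃ S ∈ K, S.card = d + 1)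
    (h2cm : Is2CM k K) {v : V} (hv : ({v} : Finset V) ∈ K)
    {U : Finset V} (hU : U ∈ K) (hvU : v ∉ U) {m : ℕ} (hm : U.card + m = d)
    {w : Finset V → k} (hw : IsChainOn k (cxLink K (insert v U)) m w)
    (hwcyc : bdry w = 0) :
    ∃ z : Finset V → k, IsChainOn k (cxLink K U) (m + 1) z ∧ bdry z = 0 ∧
      ∀ G, v ∉ G → z (insert v G) = signOf v (insert v G) • w G := by
  set Kv : Set (Finset V) := {S | S ∈ K ∧ v ∉ S} with hKv
  -- w is a chain on the link of U in K - v
  have hwKv : IsChainOn k (cxLink Kv U) m w := by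
    intro T hT
    obtain ⟨⟨hTK, hTd, hTU⟩, hTcard⟩ := hw T hT
    have hvT : v ∉ T := fun h => (Finset.disjoint_left.mp hTd h) (Finset.mem_insert_self v U)
    have hTUK : T ∪ U ∈ K := hK.2 _ hTU _ (Finset.union_subset_union (subset_refl T)
      (Finset.subset_insert v U))
    refine ⟨⟨⟨hTK, hvT⟩, Finset.disjoint_of_subset_right (Finset.subset_insert v U) hTd, ?_, ?_⟩,
      hTcard⟩
    · exact hTUK
    · intro h
      rcases Finset.mem_union.mp h with h' | h'
      · exact hvT h'
      · exact hvU h'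
  have hvanish := homology_vanishes_link_removed (k := k) hK hdim h2cm hv hU hvU hm
  obtain ⟨b, hb, hbw⟩ := hvanish w hwKv hwcyc
  -- w vanishes on v-sets
  have hwv : ∀ T, v ∈ T → w T = 0 := by
    intro T hvT
    by_contra hne
    obtain ⟨⟨_, hTd, _⟩, _⟩ := hw T hne
    exact (Finset.disjoint_left.mp hTd hvT) (Finset.mem_insert_self v U)
  -- b vanishes on v-sets
  have hbv : ∀ T, v ∈ T → b T = 0 := by
    intro T hvT
    by_contra hne
    obtain ⟨⟨⟨_, hvT'⟩, _, _⟩, _⟩ := hb T hne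
    exact hvT' hvT
  refine ⟨coneAt v w - b, ?_, ?_, ?_⟩
  · -- chain on link of U
    intro T hT
    by_cases hvT : v ∈ T
    · have hbT : b T = 0 := hbv T hvT
      have hcT : coneAt v w T ≠ 0 := by
        intro h
        apply hT
        simp [Pi.sub_apply, h, hbT]
      have hwT : w (T.erase v) ≠ 0 := by
        intro h
        apply hcT
        simp [coneAt, hvT, h]
      obtain ⟨⟨hTK, hTd, hTU⟩, hTcard⟩ := hw _ hwT
      have hTe : insert v (T.erase v) = T := Finset.insert_erase hvT
      constructor
      · refine ⟨?_, ?_, ?_⟩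
        · -- T ∈ K
          have : T ⊆ T.erase v ∪ insert v U := by
            intro x hx
            by_cases hxv : x = v
            · exact Finset.mem_union_right _ (hxv ▸ Finset.mem_insert_self v U)
            · exact Finset.mem_union_left _ (Finset.mem_erase.mpr ⟨hxv, hx⟩)
          exact hK.2 _ hTU _ this
        · -- disjoint T U
          rw [← hTe]
          refine Finset.disjoint_insert_left.mpr ⟨hvU, ?_⟩
          exact Finset.disjoint_of_subset_right (Finset.subset_insert v U) hTd
        · -- T ∪ U ∈ K
          rw [← erase_union_insert hvT]
          exact hTU
      · rw [← hTe, Finset.card_insert_of_notMem (Finset.notMem_erase v _), hTcard]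
    · have hcT : coneAt v w T = 0 := by simp [coneAt, hvT]
      have hbT : b T ≠ 0 := by
        intro h
        apply hT
        simp [Pi.sub_apply, hcT, h]
      obtain ⟨⟨⟨hTK, _⟩, hTd, hTU, _⟩, hTcard⟩ := hb T hbT
      exact ⟨⟨hTK, hTd, hTU⟩, hTcard⟩
  · rw [bdry_sub, bdry_coneAt_of_cycle v w hwv hwcyc, hbw, sub_self]
  · intro G hvG
    have h1 : b (insert v G) = 0 := hbv _ (Finset.mem_insert_self v G)
    have h2 : v ∈ insert v G := Finset.mem_insert_self v G
    simp [Pi.sub_apply, h1, coneAt, h2, Finset.erase_insert hvG]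

/-- **Claim A**: through every facet of every link there is a cycle. -/
lemma claimA
    (hK : IsComplex K)
    (hdim : (∀ S ∈ K, S.card ≤ d + 1) ∧ ∃ S ∈ K, S.card = d + 1)
    (h2cm : Is2CM k K) :
    ∀ (m : ℕ) (U : Finset V), U ∈ K → U.card + m = d →
      ∀ F, F ∈ cxLink K U → F.card = m + 1 →
        ∃ z, IsChainOn k (cxLink K U) (m + 1) z ∧ bdry z = 0 ∧ z F ≠ 0 := by
  intro m
  induction m with
  | zero =>
    intro U hU hm F hF hFcard
    obtain ⟨u, hu⟩ := Finset.card_eq_one.mp hFcard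
    subst hu
    have huK : ({u} : Finset V) ∈ K := hF.1
    have hvU : u ∉ U := fun h => (Finset.disjoint_left.mp hF.2.1 (Finset.mem_singleton_self u)) h
    obtain ⟨F₃, hUF₃, hF₃K, hvF₃, hF₃card⟩ := removed_vertex_facet (k := k) hdim h2cm huK hU hvU
    have hUcard : U.card = d := by omega
    obtain ⟨u', hu'⟩ : ∃ u', F₃ \ U = {u'} := by
      apply Finset.card_eq_one.mp
      rw [Finset.card_sdiff_of_subset hUF₃, hF₃card, hUcard]
      omega
    have hne : ({u} : Finset V) ≠ {u'} := by
      intro h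
      have : u' ∈ F₃ := by
        have : u' ∈ F₃ \ U := hu' ▸ Finset.mem_singleton_self u'
        exact (Finset.mem_sdiff.mp this).1
      rw [Finset.singleton_inj] at h
      exact hvF₃ (h ▸ this)
    refine ⟨(vtxChain u : Finset V → k) - vtxChain u', ?_, bdry_pairChain u u', ?_⟩
    · intro T hT
      have : T = {u} ∨ T = {u'} := by
        by_contra hcon
        push_neg at hcon
        simp [vtxChain, Pi.sub_apply, hcon.1, hcon.2] at hT
      rcases this with h | h
      · subst h
        exact ⟨hF, hFcard⟩
      · subst h
        refine ⟨⟨?_, ?_, ?_⟩, rfl⟩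
        · rw [← hu']
          exact hK.2 F₃ hF₃K _ Finset.sdiff_subset
        · rw [← hu']
          exact Finset.sdiff_disjoint
        · rw [← hu', Finset.sdiff_union_of_subset hUF₃]
          exact hF₃K
    · simp [vtxChain, Pi.sub_apply, hne]
  | succ m ih =>
    intro U hU hm F hF hFcard
    have hFne : F.Nonempty := Finset.card_pos.mp (by omega)
    obtain ⟨v, hvF⟩ := hFne
    have hvU : v ∉ U := fun h => (Finset.disjoint_left.mp hF.2.1 hvF) h
    have hFU : F ∪ U ∈ K := hF.2.2
    have hvK : ({v} : Finset V) ∈ K := hK.2 F hF.1 _ (Finset.singleton_subset_iff.mpr hvF)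
    have hUvK : insert v U ∈ K := hK.2 _ hFU _ (by
      intro x hx
      rcases Finset.mem_insert.mp hx with h | h
      · exact Finset.mem_union_left _ (h ▸ hvF)
      · exact Finset.mem_union_right _ h)
    have hUvcard : (insert v U).card + m = d := by
      rw [Finset.card_insert_of_notMem hvU]
      omega
    -- F.erase v is a facet of the link of insert v U
    have hFe : F.erase v ∈ cxLink K (insert v U) := by
      refine ⟨hK.2 F hF.1 _ (Finset.erase_subset v F), ?_, ?_⟩
      · refine Finset.disjoint_insert_right.mpr ⟨Finset.notMem_erase v F, ?_⟩
        exact Finset.disjoint_of_subset_left (Finset.erase_subset v F) hF.2.1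
      · rw [erase_union_insert hvF]
        exact hFU
    have hFecard : (F.erase v).card = m + 1 := by
      rw [Finset.card_erase_of_mem hvF, hFcard]
      omega
    obtain ⟨w, hw, hwcyc, hwF⟩ := ih (insert v U) hUvK hUvcard (F.erase v) hFe hFecard
    obtain ⟨z, hz, hzcyc, hzval⟩ :=
      extension_lemma hK hdim h2cm hvK hU hvU (m := m + 1) (by omega) hw hwcyc
    refine ⟨z, hz, hzcyc, ?_⟩
    have h1 := hzval (F.erase v) (Finset.notMem_erase v F)
    rw [Finset.insert_erase hvF] at h1
    rw [h1]
    exact signOf_smul_ne_zero v F hwF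

lemma signOf_pair_add {x t : V} (hxt : x ≠ t) :
    signOf t (insert x ({t} : Finset V)) + signOf x (insert x ({t} : Finset V)) = 0 := by
  unfold signOf
  rcases lt_or_gt_of_ne hxt with h | h
  · have h1 : (insert x ({t} : Finset V)).filter (fun s => s < t) = {x} := by
      rw [Finset.filter_insert, if_pos h, Finset.filter_singleton, if_neg (lt_irrefl t)]
      rfl
    have h2 : (insert x ({t} : Finset V)).filter (fun s => s < x) = ∅ := by
      rw [Finset.filter_insert, if_neg (lt_irrefl x), Finset.filter_singleton,
        if_neg (not_lt.mpr h.le)]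
    rw [h1, h2]
    simp
  · have h1 : (insert x ({t} : Finset V)).filter (fun s => s < t) = ∅ := by
      rw [Finset.filter_insert, if_neg (not_lt.mpr h.le), Finset.filter_singleton,
        if_neg (lt_irrefl t)]
    have h2 : (insert x ({t} : Finset V)).filter (fun s => s < x) = {t} := by
      rw [Finset.filter_insert, if_neg (lt_irrefl x), Finset.filter_singleton, if_pos h]
    rw [h1, h2]
    simp

/-- **Path lemma**: if `∂b = e_u - e_{u'}` then `u` and `u'` are connected by edges in
the support of `b`. -/
lemma path_lemma {b : Finset V → k} {u u' : V}
    (hb : bdry b = (vtxChain u : Finset V → k) - vtxChain u') :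
    Relation.ReflTransGen (fun x y => b (insert x ({y} : Finset V)) ≠ 0) u u' := by
  by_cases huu : u = u'
  · exact huu ▸ Relation.ReflTransGen.refl
  set R : V → V → Prop := fun x y => b (insert x ({y} : Finset V)) ≠ 0 with hR
  by_contra hcon
  set A : Set V := {x | Relation.ReflTransGen R u x} with hA
  set A' : Finset V := Finset.univ.filter (fun x => x ∈ A) with hA'
  have huA : u ∈ A' := by
    simp only [hA', Finset.mem_filter, Finset.mem_univ, true_and]
    exact Relation.ReflTransGen.refl
  have hu'A : u' ∉ A' := by
    simp only [hA', Finset.mem_filter, Finset.mem_univ, true_and]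
    exact hcon
  -- step property
  have hstep : ∀ x ∈ A', ∀ t, b (insert t ({x} : Finset V)) ≠ 0 → t ∈ A' := by
    intro x hx t hbt
    simp only [hA', Finset.mem_filter, Finset.mem_univ, true_and] at hx ⊢
    refine Relation.ReflTransGen.tail hx ?_
    show b (insert x ({t} : Finset V)) ≠ 0
    rw [Finset.pair_comm x t]
    exact hbt
  -- first computation
  have hsum1 : ∑ x ∈ A', bdry b ({x} : Finset V) = 1 := by
    have : ∀ x ∈ A', bdry b ({x} : Finset V)
        = (if x = u then (1:k) else 0) - (if x = u' then (1:k) else 0) := by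
      intro x _
      rw [hb]
      simp only [Pi.sub_apply, vtxChain, Finset.singleton_inj]
    rw [Finset.sum_congr rfl this, Finset.sum_sub_distrib,
      Finset.sum_ite_eq' A' u (fun _ => (1:k)), Finset.sum_ite_eq' A' u' (fun _ => (1:k))]
    rw [if_pos huA, if_neg hu'A, sub_zero]
  -- second computation
  have hsum2 : ∑ x ∈ A', bdry b ({x} : Finset V) = 0 := by
    have hinner : ∀ x ∈ A', bdry b ({x} : Finset V)
        = ∑ t ∈ A'.erase x, signOf t (insert t ({x} : Finset V)) • b (insert t {x}) := by
      intro x hx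
      rw [bdry]
      refine (Finset.sum_subset ?_ ?_).symm
      · intro t ht
        have := Finset.mem_erase.mp ht
        simp [Finset.mem_compl, this.1]
      · intro t ht hnt
        have htx : t ≠ x := by
          intro h
          subst h
          simp at ht
        have : t ∉ A' := fun h => hnt (Finset.mem_erase.mpr ⟨htx, h⟩)
        have hb0 : b (insert t ({x} : Finset V)) = 0 := by
          by_contra hbne
          exact this (hstep x hx t hbne)
        rw [hb0, smul_zero]
    rw [Finset.sum_congr rfl hinner]
    -- extend to full double sum
    have hext : ∀ x ∈ A', ∑ t ∈ A'.erase x, signOf t (insert t ({x} : Finset V)) • b (insert t {x})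
        = ∑ t ∈ A', if x = t then 0 else signOf t (insert t ({x} : Finset V)) • b (insert t {x}) := by
      intro x hx
      rw [← Finset.add_sum_erase A' _ hx, if_pos rfl, zero_add]
      apply Finset.sum_congr rfl
      intro t ht
      rw [if_neg (Ne.symm (Finset.mem_erase.mp ht).1)]
    rw [Finset.sum_congr rfl hext, ← Finset.sum_product']
    apply Finset.sum_involution (fun p _ => (p.2, p.1))
    · intro ⟨x, t⟩ _
      simp only
      by_cases hxt : x = t
      · rw [if_pos hxt, if_pos hxt.symm, add_zero]
      · rw [if_neg hxt, if_neg (Ne.symm hxt), Finset.pair_comm t x, ← add_smul,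
          signOf_pair_add hxt, zero_smul]
    · intro ⟨x, t⟩ _ hne hp
      apply hne
      have : x = t := congrArg Prod.snd hp
      rw [if_pos this]
    · intro ⟨x, t⟩ hp
      simp only [Finset.mem_product] at hp ⊢
      exact ⟨hp.2, hp.1⟩
    · intro p hp
      rfl
  rw [hsum1] at hsum2
  exact one_ne_zero hsum2

/-- **Claim B**: separating classes of facets of links are everything or nothing. -/
lemma claimB
    (hK : IsComplex K)
    (hdim : (∀ S ∈ K, S.card ≤ d + 1) ∧ ∃ S ∈ K, S.card = d + 1)
    (h2cm : Is2CM k K) :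
    ∀ (m : ℕ) (U : Finset V), U ∈ K → U.card + m = d →
      ∀ C : Set (Finset V), Separating (k := k) (cxLink K U) (m + 1) C →
        ∀ F F', F ∈ cxLink K U → F.card = m + 1 → F' ∈ cxLink K U → F'.card = m + 1 →
          F ∈ C → F' ∈ C := by
  intro m
  induction m with
  | zero =>
    intro U hU hm C hsep F F' hF hFcard hF' hF'card hFC
    by_cases hFF : F = F'
    · exact hFF ▸ hFC
    obtain ⟨u, hu⟩ := Finset.card_eq_one.mp hFcard
    obtain ⟨u', hu'⟩ := Finset.card_eq_one.mp hF'card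
    subst hu hu'
    have hne : u ≠ u' := fun h => hFF (by rw [h])
    set c : Finset V → k := (vtxChain u : Finset V → k) - vtxChain u' with hc
    have hcu : c ({u} : Finset V) = 1 := by
      simp [hc, vtxChain, Finset.singleton_inj, hne]
    have hcu' : c ({u'} : Finset V) = -1 := by
      simp [hc, vtxChain, Finset.singleton_inj, Ne.symm hne]
    have hcother : ∀ T, T ≠ ({u} : Finset V) → T ≠ ({u'} : Finset V) → c T = 0 := by
      intro T h1 h2
      simp [hc, vtxChain, Pi.sub_apply, h1, h2]
    have hcmin : IsMinimalCycle 1 c := by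
      refine ⟨?_, ?_, bdry_pairChain u u', ?_⟩
      · intro h
        have := congrFun h ({u} : Finset V)
        rw [hcu] at this
        exact one_ne_zero this
      · intro T hT
        by_cases h1 : T = ({u} : Finset V)
        · rw [h1]; rfl
        by_cases h2 : T = ({u'} : Finset V)
        · rw [h2]; rfl
        exact absurd (hcother T h1 h2) hT
      · intro c' hsub hcyc'
        have hval : c' ({u} : Finset V) + c' ({u'} : Finset V) = 0 := by
          have h0 := congrFun hcyc' (∅ : Finset V)
          rw [bdry] at h0
          have hterm : ∀ t ∈ (∅ : Finset V)ᶜ, signOf t (insert t ∅) • c' (insert t ∅)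
              = c' {t} := by
            intro t _
            have h1 : insert t (∅ : Finset V) = {t} := rfl
            rw [h1, signOf_singleton, one_smul]
          rw [Finset.sum_congr rfl hterm] at h0
          have hc0 : (∅ : Finset V)ᶜ = Finset.univ := by simp
          rw [hc0] at h0
          have hsubuniv : ({u, u'} : Finset V) ⊆ Finset.univ := Finset.subset_univ _
          have hzero : ∀ t ∈ Finset.univ, t ∉ ({u, u'} : Finset V) → c' ({t} : Finset V) = 0 := by
            intro t _ ht
            simp only [Finset.mem_insert, Finset.mem_singleton] at ht
            push_neg at ht
            rcases hsub ({t} : Finset V) with h | h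
            · rw [h]
              exact hcother _ (fun hh => ht.1 (Finset.singleton_inj.mp hh))
                (fun hh => ht.2 (Finset.singleton_inj.mp hh))
            · exact h
          rw [← Finset.sum_subset hsubuniv hzero, Finset.sum_pair hne] at h0
          exact h0
        rcases hsub ({u} : Finset V) with h1 | h1 <;> rcases hsub ({u'} : Finset V) with h2 | h2
        · -- c' = c
          right
          funext T
          rcases hsub T with h | h
          · exact h
          · rw [h]
            by_cases ht1 : T = ({u} : Finset V)
            · subst ht1
              rw [h] at h1
              exact h1
            by_cases ht2 : T = ({u'} : Finset V)
            · subst ht2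
              rw [h] at h2
              exact h2
            · exact (hcother T ht1 ht2).symm
        · exfalso
          rw [h1, hcu, h2, add_zero] at hval
          exact one_ne_zero hval
        · exfalso
          rw [h1, h2, hcu', zero_add] at hval
          simp at hval
        · -- c' = 0
          left
          funext T
          show c' T = 0
          rcases hsub T with h | h
          · rw [h]
            by_cases ht1 : T = ({u} : Finset V)
            · subst ht1
              rw [← h, h1]
            by_cases ht2 : T = ({u'} : Finset V)
            · subst ht2
              rw [← h, h2]
            · exact hcother T ht1 ht2
          · exact h
    have hcchain : IsChainOn k (cxLink K U) 1 c := by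
      intro T hT
      by_cases h1 : T = ({u} : Finset V)
      · subst h1; exact ⟨hF, rfl⟩
      by_cases h2 : T = ({u'} : Finset V)
      · subst h2; exact ⟨hF', rfl⟩
      · exact absurd (hcother T h1 h2) hT
    rcases hsep c hcmin hcchain with h | h
    · exact h _ (by rw [hcu']; simp)
    · exact absurd hFC (h _ (by rw [hcu]; exact one_ne_zero))
  | succ m ih =>
    intro U hU hm C hsep F F' hF hFcard hF' hF'card hFC
    have hpure : IsPure K := h2cm.1.1
    -- Shared vertex lemma
    have svl : ∀ G G', G ∈ cxLink K U → G.card = m + 2 → G' ∈ cxLink K U → G'.card = m + 2 →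
        G ∈ C → ∀ v, v ∈ G → v ∈ G' → G' ∈ C := by
      intro G G' hG hGcard hG' hG'card hGC v hvG hvG'
      have hvU : v ∉ U := fun h => (Finset.disjoint_left.mp hG.2.1 hvG) h
      have hvK : ({v} : Finset V) ∈ K := hK.2 G hG.1 _ (Finset.singleton_subset_iff.mpr hvG)
      have hUv : insert v U ∈ K := hK.2 _ hG.2.2 _ (by
        intro x hx
        rcases Finset.mem_insert.mp hx with h | h
        · exact Finset.mem_union_left _ (h ▸ hvG)
        · exact Finset.mem_union_right _ h)
      have hUvcard : (insert v U).card + m = d := by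
        rw [Finset.card_insert_of_notMem hvU]
        omega
      set C' : Set (Finset V) := {T | insert v T ∈ C} with hC'
      have hsep' : Separating (k := k) (cxLink K (insert v U)) (m + 1) C' := by
        intro w hwmin hwchain
        obtain ⟨z, hz, hzcyc, hzval⟩ := extension_lemma hK hdim h2cm hvK hU hvU
          (m := m + 1) (by omega) hwchain hwmin.2.2.1
        have hzres : bdry (restr C z) = 0 :=
          bdry_restr_of_separating hsep (esupp z).card z hz hzcyc le_rfl
        have hcontr : bdry (contrAt v (restr C z)) = 0 := bdry_contrAt v _ hzres
        have hwv : ∀ T, v ∈ T → w T = 0 := by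
          intro T hvT
          by_contra hne0
          obtain ⟨⟨_, hTd, _⟩, _⟩ := hwchain T hne0
          exact (Finset.disjoint_left.mp hTd hvT) (Finset.mem_insert_self v U)
        have heq : contrAt v (restr C z) = restr C' w := by
          funext G₀
          by_cases hvG₀ : v ∈ G₀
          · rw [contrAt_vanish v _ G₀ hvG₀]
            have : w G₀ = 0 := hwv G₀ hvG₀
            simp [restr, this]
          · have hzv := hzval G₀ hvG₀
            simp only [contrAt, if_neg hvG₀, restr]
            by_cases hCm : insert v G₀ ∈ C
            · rw [if_pos hCm, hzv, signOf_smul_smul]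
              rw [if_pos (by exact hCm : G₀ ∈ C')]
            · rw [if_neg hCm, smul_zero, if_neg (by exact hCm : G₀ ∉ C')]
          
        rw [heq] at hcontr
        rcases hwmin.2.2.2 (restr C' w) (restr_subchain C' w) hcontr with h0 | hww
        · right
          intro T hT hTC'
          have : restr C' w T = w T := by simp [restr, hTC']
          rw [h0] at this
          exact hT this.symm
        · left
          intro T hT
          by_contra hTC'
          have : restr C' w T = 0 := by simp [restr, hTC']
          rw [hww] at this
          exact hT this
      -- facets of the smaller link
      have herase : ∀ H, H ∈ cxLink K U → H.card = m + 2 → v ∈ H →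
          H.erase v ∈ cxLink K (insert v U) ∧ (H.erase v).card = m + 1 := by
        intro H hH hHcard hvH
        refine ⟨⟨hK.2 H hH.1 _ (Finset.erase_subset v H), ?_, ?_⟩, ?_⟩
        · refine Finset.disjoint_insert_right.mpr ⟨Finset.notMem_erase v H, ?_⟩
          exact Finset.disjoint_of_subset_left (Finset.erase_subset v H) hH.2.1
        · rw [erase_union_insert hvH]
          exact hH.2.2
        · rw [Finset.card_erase_of_mem hvH, hHcard]
          omega
      obtain ⟨hGe, hGecard⟩ := herase G hG hGcard hvG
      obtain ⟨hG'e, hG'ecard⟩ := herase G' hG' hG'card hvG'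
      have hGeC' : G.erase v ∈ C' := by
        show insert v (G.erase v) ∈ C
        rw [Finset.insert_erase hvG]
        exact hGC
      have := ih (insert v U) hUv hUvcard C' hsep' (G.erase v) (G'.erase v) hGe hGecard
        hG'e hG'ecard hGeC'
      show G' ∈ C
      rw [← Finset.insert_erase hvG']
      exact this
    -- main argument via vertex paths
    obtain ⟨u, huF⟩ := Finset.card_pos.mp (show 0 < F.card by omega)
    obtain ⟨u', hu'F'⟩ := Finset.card_pos.mp (show 0 < F'.card by omega)
    by_cases huu : u = u'
    · exact svl F F' hF hFcard hF' hF'card hFC u huF (huu ▸ hu'F')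
    have hlinkcx : IsComplex (cxLink K U) := isComplex_cxLink hK hU
    have hvanish : HomologyVanishes k (cxLink K U) 1 :=
      h2cm.1.2 U hU 1 ⟨F, hF, by omega⟩
    have hc₀chain : IsChainOn k (cxLink K U) 1 ((vtxChain u : Finset V → k) - vtxChain u') := by
      intro T hT
      by_cases h1 : T = ({u} : Finset V)
      · subst h1
        exact ⟨hlinkcx.2 F hF _ (Finset.singleton_subset_iff.mpr huF), rfl⟩
      by_cases h2 : T = ({u'} : Finset V)
      · subst h2
        exact ⟨hlinkcx.2 F' hF' _ (Finset.singleton_subset_iff.mpr hu'F'), rfl⟩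
      · exact absurd (by simp [vtxChain, Pi.sub_apply, h1, h2]) hT
    obtain ⟨b, hb, hbc₀⟩ := hvanish _ hc₀chain (bdry_pairChain u u')
    have hpath := path_lemma hbc₀
    -- propagate along the path
    have hprop : ∀ x, Relation.ReflTransGen (fun x y => b (insert x ({y} : Finset V)) ≠ 0) u x →
        ∀ G, G ∈ cxLink K U → G.card = m + 2 → x ∈ G → G ∈ C := by
      intro x hx
      induction hx with
      | refl =>
        intro G hG hGcard hxG
        exact svl F G hF hFcard hG hGcard hFC u huF hxG
      | @tail y z h₁ hR ih' =>
        intro G hG hGcard hzG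
        have hedge : insert y ({z} : Finset V) ∈ cxLink K U ∧
            (insert y ({z} : Finset V)).card = 2 := hb _ hR
        obtain ⟨G₂, hG₂, hsubG₂, hG₂card⟩ := link_facet hK hdim hpure hU hedge.1
        have hG₂card' : G₂.card = m + 2 := by omega
        have hyG₂ : y ∈ G₂ := hsubG₂ (Finset.mem_insert_self y _)
        have hzG₂ : z ∈ G₂ := hsubG₂ (Finset.mem_insert_of_mem (Finset.mem_singleton_self z))
        have hG₂C : G₂ ∈ C := ih' G₂ hG₂ hG₂card' hyG₂
        exact svl G₂ G hG₂ hG₂card' hG hGcard hG₂C z hzG₂ hzG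
    exact hprop u' hpath F' hF' hF'card hu'F'

/-- **Greedy covering lemma.** -/
lemma greedy
    (hK : IsComplex K)
    (hdim : (∀ S ∈ K, S.card ≤ d + 1) ∧ ∃ S ∈ K, S.card = d + 1)
    (h2cm : Is2CM k K) :
    ∀ (n m : ℕ) (c : Fin (m + 1) → Finset V → k),
      (∀ i, IsMinimalCycle (d + 1) (c i) ∧ IsChainOn k K (d + 1) (c i)) →
      (∀ i : Fin (m + 1), 0 < (i : ℕ) →
        ∃ F, F.card = d + 1 ∧ c i F ≠ 0 ∧ ∃ j, j < i ∧ c j F ≠ 0) →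
      ((Finset.univ.filter
        (fun F : Finset V => (F ∈ K ∧ F.card = d + 1) ∧ ∀ i, c i F = 0)).card ≤ n) →
      ∃ (M : ℕ) (c' : Fin (M + 1) → Finset V → k),
        (∀ i, IsMinimalCycle (d + 1) (c' i) ∧ IsChainOn k K (d + 1) (c' i)) ∧
        (∀ i : Fin (M + 1), 0 < (i : ℕ) →
          ∃ F, F.card = d + 1 ∧ c' i F ≠ 0 ∧ ∃ j, j < i ∧ c' j F ≠ 0) ∧
        ∀ F ∈ K, F.card = d + 1 → ∃ i, c' i F ≠ 0 := by
  intro n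
  induction n with
  | zero =>
    intro m c h1 h2 hcard
    by_cases hcov : ∀ F ∈ K, F.card = d + 1 → ∃ i, c i F ≠ 0
    · exact ⟨m, c, h1, h2, hcov⟩
    · exfalso
      push_neg at hcov
      obtain ⟨F₁, hF₁K, hF₁card, hF₁⟩ := hcov
      have : F₁ ∈ Finset.univ.filter
          (fun F : Finset V => (F ∈ K ∧ F.card = d + 1) ∧ ∀ i, c i F = 0) := by
        simp only [Finset.mem_filter, Finset.mem_univ, true_and]
        exact ⟨⟨hF₁K, hF₁card⟩, hF₁⟩
      exact absurd (Nat.le_zero.mp hcard) (Finset.card_ne_zero_of_mem this)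
  | succ n ih =>
    intro m c h1 h2 hcard
    by_cases hcov : ∀ F ∈ K, F.card = d + 1 → ∃ i, c i F ≠ 0
    · exact ⟨m, c, h1, h2, hcov⟩
    push_neg at hcov
    obtain ⟨F₁, hF₁K, hF₁card, hF₁⟩ := hcov
    set CS : Set (Finset V) := {T | ∃ i, c i T ≠ 0} with hCS
    by_cases hex : ∃ z, IsMinimalCycle (d + 1) z ∧ IsChainOn k K (d + 1) z ∧
        (∃ T, z T ≠ 0 ∧ T ∈ CS) ∧ (∃ T, z T ≠ 0 ∧ T ∉ CS)
    · obtain ⟨z, hzmin, hzchain, ⟨T₀, hT₀ne, hT₀CS⟩, ⟨T₁, hT₁ne, hT₁CS⟩⟩ := hex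
      set c' : Fin (m + 1 + 1) → Finset V → k := Fin.snoc c z with hc'
      have hlast : c' (Fin.last (m + 1)) = z := by simp [hc']
      have hcast : ∀ i : Fin (m + 1), c' i.castSucc = c i := by
        intro i
        simp [hc']
      have h1' : ∀ i, IsMinimalCycle (d + 1) (c' i) ∧ IsChainOn k K (d + 1) (c' i) := by
        intro i
        refine Fin.lastCases ?_ ?_ i
        · rw [hlast]
          exact ⟨hzmin, hzchain⟩
        · intro i₀
          rw [hcast]
          exact h1 i₀
      have h2' : ∀ i : Fin (m + 1 + 1), 0 < (i : ℕ) →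
          ∃ F, F.card = d + 1 ∧ c' i F ≠ 0 ∧ ∃ j, j < i ∧ c' j F ≠ 0 := by
        intro i
        refine Fin.lastCases ?_ ?_ i
        · intro _
          obtain ⟨i₀, hi₀⟩ := hT₀CS
          refine ⟨T₀, hzmin.2.1 T₀ hT₀ne, by rw [hlast]; exact hT₀ne,
            i₀.castSucc, Fin.castSucc_lt_last i₀, by rw [hcast]; exact hi₀⟩
        · intro i₀ hi₀
          have : 0 < (i₀ : ℕ) := by simpa using hi₀
          obtain ⟨F, hFcard, hFne, j, hj, hjne⟩ := h2 i₀ this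
          exact ⟨F, hFcard, by rw [hcast]; exact hFne, j.castSucc,
            by simpa [Fin.castSucc_lt_castSucc_iff] using hj, by rw [hcast]; exact hjne⟩
      have hsubF : Finset.univ.filter
          (fun F : Finset V => (F ∈ K ∧ F.card = d + 1) ∧ ∀ i, c' i F = 0)
          ⊂ Finset.univ.filter
          (fun F : Finset V => (F ∈ K ∧ F.card = d + 1) ∧ ∀ i, c i F = 0) := by
        rw [Finset.ssubset_iff_of_subset]
        · refine ⟨T₁, ?_, ?_⟩
          · simp only [Finset.mem_filter, Finset.mem_univ, true_and]
            refine ⟨⟨(hzchain T₁ hT₁ne).1, (hzchain T₁ hT₁ne).2⟩, ?_⟩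
            intro i
            by_contra hne
            exact hT₁CS ⟨i, hne⟩
          · simp only [Finset.mem_filter, Finset.mem_univ, true_and, not_and]
            intro _
            push_neg
            exact ⟨Fin.last (m + 1), by rw [hlast]; exact hT₁ne⟩
        · intro T hT
          simp only [Finset.mem_filter, Finset.mem_univ, true_and] at hT ⊢
          refine ⟨hT.1, fun i => ?_⟩
          have := hT.2 i.castSucc
          rwa [hcast] at this
      have hlt : (Finset.univ.filter
          (fun F : Finset V => (F ∈ K ∧ F.card = d + 1) ∧ ∀ i, c' i F = 0)).card ≤ n := by
        have := Finset.card_lt_card hsubF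
        omega
      exact ih (m + 1) c' h1' h2' hlt
    · exfalso
      have hsep : Separating (k := k) K (d + 1) CS := by
        intro z hzmin hzchain
        by_cases h : ∃ T, z T ≠ 0 ∧ T ∈ CS
        · left
          intro T hT
          by_contra hTC
          exact hex ⟨z, hzmin, hzchain, h, ⟨T, hT, hTC⟩⟩
        · right
          intro T hT hTC
          exact h ⟨T, hT, hTC⟩
      rw [← cxLink_empty hK] at hsep
      obtain ⟨T₂, hT₂⟩ : ∃ T₂, c 0 T₂ ≠ 0 := Function.ne_iff.mp (h1 0).1.1
      have hT₂K := (h1 0).2 T₂ hT₂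
      have hT₂CS : T₂ ∈ CS := ⟨0, hT₂⟩
      have hmemlink : ∀ {T : Finset V}, T ∈ K → T ∈ cxLink K ∅ := by
        intro T hT
        rw [cxLink_empty hK]
        exact hT
      have hall := claimB hK hdim h2cm d ∅ hK.1 (by simp) CS hsep T₂ F₁
        (hmemlink hT₂K.1) (by rw [hT₂K.2]) (hmemlink hF₁K) (by rw [hF₁card]) hT₂CS
      obtain ⟨i, hi⟩ := hall
      exact hi (hF₁ i)

end Aux

/-- **decomposition theorem.** Every `d`-dimensional doubly
Cohen–Macaulay complex `K` over a field `k` (`d ≥ 1`) is a union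
`K = S₁ ∪ ⋯ ∪ S_m` of minimal `d`-cycle complexes (spanned by supports of minimal
`d`-cycles, i.e. cycles on cardinality-`(d+1)` sets) such that for every `i > 1`,
`S_i ∩ (S₁ ∪ ⋯ ∪ S_{i−1})` contains a face of dimension `d`. -/
theorem decomposition_of_2CM_into_minimal_cycle_complexes
    {V : Type*} [Fintype V] [LinearOrder V] (k : Type*) [Field k]
    (d : ℕ) (hd : 1 ≤ d) (K : Set (Finset V))
    (hK : IsComplex K)
    (hdim : (∀ S ∈ K, S.card ≤ d + 1) ∧ ∃ S ∈ K, S.card = d + 1)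
    (h2cm : Is2CM k K) :
    ∃ m : ℕ, 1 ≤ m ∧ ∃ c : Fin m → Finset V → k,
      (∀ i, IsMinimalCycle (d + 1) (c i)) ∧
      K = ⋃ i, spannedComplex (c i) ∧
      ∀ i : Fin m, 0 < (i : ℕ) →
        ∃ F : Finset V, F.card = d + 1 ∧
          F ∈ spannedComplex (c i) ∩ ⋃ j ∈ {j : Fin m | j < i}, spannedComplex (c j) := by
  classical
  obtain ⟨F₀, hF₀K, hF₀card⟩ := hdim.2
  have hF₀link : F₀ ∈ cxLink K ∅ := by
    rw [cxLink_empty hK]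
    exact hF₀K
  obtain ⟨z, hzchain, hzcyc, hzF₀⟩ :=
    claimA hK hdim h2cm d ∅ hK.1 (by simp) F₀ hF₀link (by rw [hF₀card])
  rw [cxLink_empty hK] at hzchain
  have hzsimp : IsSimpChain (d + 1) z := fun T hT => (hzchain T hT).2
  obtain ⟨c₀, hc₀sub, hc₀min, hc₀F₀⟩ :=
    extract_minimal (esupp z).card (d + 1) z F₀ hzsimp hzcyc hzF₀ le_rfl
  have hc₀chain : IsChainOn k K (d + 1) c₀ := hc₀sub.chainOn hzchain
  obtain ⟨M, c', h1', h2', hcov⟩ := greedy hK hdim h2cm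
    (Finset.univ.filter
      (fun F : Finset V => (F ∈ K ∧ F.card = d + 1) ∧ ∀ i : Fin 1, c₀ F = 0)).card
    0 (fun _ => c₀)
    (fun _ => ⟨hc₀min, hc₀chain⟩)
    (by
      intro i hi
      have := i.isLt
      omega)
    le_rfl
  refine ⟨M + 1, by omega, c', fun i => (h1' i).1, ?_, ?_⟩
  · ext S
    constructor
    · intro hS
      obtain ⟨F₂, hF₂K, hSF₂, hF₂card⟩ := exists_facet hdim h2cm.1.1 hS
      obtain ⟨i, hi⟩ := hcov F₂ hF₂K hF₂card
      exact Set.mem_iUnion.mpr ⟨i, ⟨F₂, hi, hSF₂⟩⟩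
    · intro hS
      obtain ⟨i, T, hTne, hST⟩ := Set.mem_iUnion.mp hS
      exact hK.2 T ((h1' i).2 T hTne).1 S hST
  · intro i hi
    obtain ⟨F, hFcard, hFne, j, hj, hjne⟩ := h2' i hi
    refine ⟨F, hFcard, Set.mem_inter ⟨F, hFne, subset_rfl⟩ ?_⟩
    exact Set.mem_iUnion₂.mpr ⟨j, hj, ⟨F, hjne, subset_rfl⟩⟩

end Paper2CM
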